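/- Let f ∈ ℚ[x] with f(0) ≠ 0 have no multiple roots, and order its roots as α_1,…,α_s,γ_1,…,γ_t (n = s+t) where α_1,…,α_s are exactly the roots of f that are not roots of rational. If the Galois-like group G_f is doubly transitive as a permutation group on the roots, then every v ∈ R_f (computed with respect to this ordering) satisfies v(1) = ⋯ = v(s) = (v(1)+⋯+v(n))/n. -/

import Mathlib

noncomputable section

open Polynomial

/-- `z` is a root of rational: some positive power of `z` is rational. -/
def IsRootOfRational (z : ℂ) : Prop := ∃ k : ℕ, 0 < k ∧ ∃ q : ℚ, z ^ k = (q : ℂ)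

/-- `z` is a rational number (viewed in `ℂ`). -/
def IsRat (z : ℂ) : Prop := ∃ q : ℚ, z = (q : ℂ)

/-- The Galois-like group `G_f`: permutations of the (indexed) roots preserving all
multiplicative relations. -/
def GaloisLike {ι : Type*} [Fintype ι] (r : ι → ℂ) : Set (Equiv.Perm ι) :=
  {σ | ∀ v : ι → ℤ, (∏ i, r i ^ v i) = 1 → (∏ i, r (σ i) ^ v i) = 1}

/-- The Galois-like group `G_f^B`. -/
def GaloisLikeB {ι : Type*} [Fintype ι] (r : ι → ℂ) : Set (Equiv.Perm ι) :=
  {σ | ∀ v : ι → ℤ, IsRat (∏ i, r i ^ v i) → (∏ i, r (σ i) ^ v i) = ∏ i, r i ^ v i}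

/-- The Galois-like group `G_f^ℚ`. -/
def GaloisLikeQ {ι : Type*} [Fintype ι] (r : ι → ℂ) : Set (Equiv.Perm ι) :=
  {σ | ∀ v : ι → ℤ, IsRat (∏ i, r i ^ v i) → IsRat (∏ i, r (σ i) ^ v i)}

/-- The exponent lattice of the vector `w` is trivial. -/
def VecLatticeTrivial {ι : Type*} [Fintype ι] (w : ι → ℂ) : Prop :=
  ∀ u : ι → ℤ, (∏ i, w i ^ u i) = 1 → ∀ i j : ι, u i = u j

/-- The lattice `R_w^ℚ` of the vector `w` is trivial. -/
def VecLatticeQTrivial {ι : Type*} [Fintype ι] (w : ι → ℂ) : Prop :=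
  ∀ u : ι → ℤ, IsRat (∏ i, w i ^ u i) → ∀ i j : ι, u i = u j

/-- A subset `M ⊆ ℚ[G/H]` is ℚ-admissible: there is `μ ∈ ℚ[G]` with stabilizer
(under left multiplication) exactly `H` such that `mμ = 0` for all `m ∈ M`
(here `Σ_{g∈G} m(ḡ) • gμ = |H| ⋅ (mμ)`, so we express `mμ = 0` this way). -/
def IsQAdmissible {G : Type*} [Group G] (H : Subgroup G) (M : Set ((G ⧸ H) →₀ ℚ)) : Prop :=
  ∃ μ : MonoidAlgebra ℚ G,
    (∀ g : G, MonoidAlgebra.single g (1 : ℚ) * μ = μ ↔ g ∈ H) ∧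
    ∀ m ∈ M, (∑ᶠ g : G, m (QuotientGroup.mk g) • (MonoidAlgebra.single g (1 : ℚ) * μ)) = 0

/-- A ℚ-subspace of `ℚ[G/H]` is a `ℚ[G]`-submodule iff it is stable under the
permutation action of `G` on `G/H`. -/
def IsGStable {G : Type*} [Group G] (H : Subgroup G) (M : Submodule ℚ ((G ⧸ H) →₀ ℚ)) : Prop :=
  ∀ g : G, ∀ m ∈ M, Finsupp.mapDomain (fun x : G ⧸ H => g • x) m ∈ M

/-- The pair `(G,H)` is ℚ-trivial: the only ℚ-admissible `ℚ[G]`-submodules of `ℚ[G/H]`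
are `0` and `V₁` (the line of constant coefficient vectors). -/
def QTrivialPair {G : Type*} [Group G] (H : Subgroup G) : Prop :=
  ∀ M : Submodule ℚ ((G ⧸ H) →₀ ℚ), IsGStable H M →
    IsQAdmissible H (M : Set ((G ⧸ H) →₀ ℚ)) →
    M = ⊥ ∨ (M : Set ((G ⧸ H) →₀ ℚ)) = {m | ∃ a : ℚ, ∀ x, m x = a}

/-- The action of `G` on `G/H` is transitive. -/
def PairTransitive {G : Type*} [Group G] (H : Subgroup G) : Prop :=
  ∀ x y : G ⧸ H, ∃ g : G, g • x = y

/-- The action of `G` on `G/H` is doubly transitive. -/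
def PairDoublyTransitive {G : Type*} [Group G] (H : Subgroup G) : Prop :=
  ∀ x₁ x₂ y₁ y₂ : G ⧸ H, x₁ ≠ x₂ → y₁ ≠ y₂ → ∃ g : G, g • x₁ = y₁ ∧ g • x₂ = y₂

/-- The action of `G` on `G/H` is doubly homogeneous. -/
def PairDoublyHomogeneous {G : Type*} [Group G] (H : Subgroup G) : Prop :=
  ∀ x₁ x₂ y₁ y₂ : G ⧸ H, x₁ ≠ x₂ → y₁ ≠ y₂ →
    ∃ g : G, ({g • x₁, g • x₂} : Set (G ⧸ H)) = {y₁, y₂}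

/-- A set of permutations of `ι` acts transitively. -/
def SetTransitive {ι : Type*} (S : Set (Equiv.Perm ι)) : Prop :=
  ∀ i j : ι, ∃ σ ∈ S, σ i = j

/-- A set of permutations of `ι` acts doubly transitively. -/
def SetDoublyTransitive {ι : Type*} (S : Set (Equiv.Perm ι)) : Prop :=
  ∀ i j k l : ι, i ≠ j → k ≠ l → ∃ σ ∈ S, σ i = k ∧ σ j = l

/-- A set of permutations of `ι` acts doubly homogeneously. -/
def SetDoublyHomogeneous {ι : Type*} (S : Set (Equiv.Perm ι)) : Prop :=
  ∀ i j k l : ι, i ≠ j → k ≠ l → ∃ σ ∈ S, ({σ i, σ j} : Set ι) = {k, l}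


lemma zpow_sum' {G : Type*} [CommGroup G] (a : G) {β : Type*} (s : Finset β) (g : β → ℤ) :
    a ^ (∑ b ∈ s, g b) = ∏ b ∈ s, a ^ g b := by
  induction s using Finset.cons_induction with
  | empty => simp
  | cons b s hb ih => rw [Finset.sum_cons, Finset.prod_cons, zpow_add, ih]

lemma galoisLike_iff {ι : Type*} [Fintype ι] (r : ι → ℂ) (σ : Equiv.Perm ι) :
    σ ∈ GaloisLike r ↔ ∀ v : ι → ℤ, (∏ i, r i ^ v i) = 1 → (∏ i, r i ^ v (σ⁻¹ i)) = 1 := by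
  have hre : ∀ v : ι → ℤ, (∏ i, r (σ i) ^ v i) = ∏ i, r i ^ v (σ⁻¹ i) := by
    intro v
    rw [← Equiv.prod_comp σ (fun i => r i ^ v (σ⁻¹ i))]
    refine Finset.prod_congr rfl fun i _ => ?_
    simp
  constructor <;> intro h v hv
  · rw [← hre]; exact h v hv
  · rw [hre]; exact h v hv

lemma galoisLike_one {ι : Type*} [Fintype ι] (r : ι → ℂ) :
    (1 : Equiv.Perm ι) ∈ GaloisLike r := fun v hv => by simpa using hv

lemma galoisLike_mul {ι : Type*} [Fintype ι] {r : ι → ℂ} {σ τ : Equiv.Perm ι}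
    (hσ : σ ∈ GaloisLike r) (hτ : τ ∈ GaloisLike r) : σ * τ ∈ GaloisLike r := by
  rw [galoisLike_iff] at hσ hτ ⊢
  intro v hv
  have := hσ (fun k => v (τ⁻¹ k)) (hτ v hv)
  simpa [mul_inv_rev, Equiv.Perm.mul_apply] using this

lemma galoisLike_pow {ι : Type*} [Fintype ι] {r : ι → ℂ} {σ : Equiv.Perm ι}
    (hσ : σ ∈ GaloisLike r) : ∀ m : ℕ, σ ^ m ∈ GaloisLike r := by
  intro m
  induction m with
  | zero => simpa using galoisLike_one r
  | succ m ih => rw [pow_succ]; exact galoisLike_mul ih hσ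

lemma galoisLike_inv {ι : Type*} [Fintype ι] {r : ι → ℂ} {σ : Equiv.Perm ι}
    (hσ : σ ∈ GaloisLike r) : σ⁻¹ ∈ GaloisLike r := by
  have h2 : 0 < orderOf σ := orderOf_pos σ
  have h3 : σ⁻¹ = σ ^ (orderOf σ - 1) := by
    refine inv_eq_of_mul_eq_one_right ?_
    rw [← pow_succ', Nat.sub_add_cancel h2, pow_orderOf_eq_one]
  rw [h3]
  exact galoisLike_pow hσ _
lemma prod_roots_rat (f : Polynomial ℚ) (hf0 : f.eval 0 ≠ 0) (n : ℕ) (hn : n = f.natDegree)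
    (r : Fin n → ℂ) (hinj : Function.Injective r)
    (hroot : ∀ i, Polynomial.aeval (r i) f = 0) :
    ∃ q : ℚ, q ≠ 0 ∧ (∏ i, r i) = (q : ℂ) := by
  have hf : f ≠ 0 := fun h => hf0 (by simp [h])
  set F := f.map (algebraMap ℚ ℂ) with hF
  have hF0 : F ≠ 0 := (Polynomial.map_ne_zero_iff ((algebraMap ℚ ℂ).injective)).mpr hf
  have hFroot : ∀ i, F.IsRoot (r i) := by
    intro i
    have := hroot i
    rwa [Polynomial.aeval_def, ← Polynomial.eval_map] at this
  have hnodup : (Finset.univ.val.map r).Nodup :=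
    Multiset.Nodup.map hinj Finset.univ.nodup
  have hle : (Finset.univ.val.map r) ≤ F.roots := by
    rw [Multiset.le_iff_subset hnodup]
    intro z hz
    obtain ⟨i, _, rfl⟩ := Multiset.mem_map.mp hz
    exact (Polynomial.mem_roots hF0).mpr (hFroot i)
  have hcard2 : Multiset.card F.roots ≤ n := by
    calc Multiset.card F.roots ≤ F.natDegree := Polynomial.card_roots' F
    _ = n := by rw [hF, Polynomial.natDegree_map, hn]
  have hroots : F.roots = Finset.univ.val.map r :=
    (Multiset.eq_of_le_of_card_le hle (by simpa using hcard2)).symm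
  have hsplit : F.Splits := IsAlgClosed.splits F
  have heq := hsplit.eq_prod_roots
  have heval : F.eval 0 = F.leadingCoeff * ∏ i, -(r i) := by
    conv_lhs => rw [heq]
    rw [Polynomial.eval_mul, Polynomial.eval_C, hroots, Polynomial.eval_multiset_prod,
      Multiset.map_map]
    congr 1
    rw [Finset.prod_eq_multiset_prod]
    simp [Function.comp_def]
  have heval0 : F.eval 0 = ((f.eval 0 : ℚ) : ℂ) := Polynomial.eval_zero_map _ f
  have hlcF : F.leadingCoeff = ((f.leadingCoeff : ℚ) : ℂ) := by
    rw [hF, Polynomial.leadingCoeff_map_of_injective ((algebraMap ℚ ℂ).injective)]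
    rfl
  have hprodneg : (∏ i, -(r i)) = (-1 : ℂ) ^ n * ∏ i, r i := by
    have h1 : ∀ i : Fin n, -(r i) = (-1:ℂ) * r i := fun i => by ring
    rw [Finset.prod_congr rfl fun i _ => h1 i, Finset.prod_mul_distrib, Finset.prod_const,
      Finset.card_univ, Fintype.card_fin]
  have hlc : f.leadingCoeff ≠ 0 := Polynomial.leadingCoeff_ne_zero.mpr hf
  refine ⟨(-1) ^ n * f.eval 0 / f.leadingCoeff, by positivity, ?_⟩
  have key : ((f.eval 0 : ℚ) : ℂ) = ((f.leadingCoeff : ℚ) : ℂ) * ((-1 : ℂ) ^ n * ∏ i, r i) := by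
    rw [← heval0, heval, hlcF, hprodneg]
  have hlc' : ((f.leadingCoeff : ℚ) : ℂ) ≠ 0 := by exact_mod_cast hlc
  have hm : ((-1 : ℂ)) ^ n * ((-1 : ℂ)) ^ n = 1 := by
    rw [← mul_pow]; norm_num
  push_cast
  rw [eq_div_iff hlc']
  linear_combination (-(-1:ℂ)^n) * key + (-(((f.leadingCoeff : ℚ)):ℂ) * ∏ i, r i) * hm

/-- Order the roots of `f` as `α₁,…,α_s,γ₁,…,γ_t` (`n = s + t`) where
`α₁,…,α_s` are exactly the roots that are not roots of rational. If `G_f` is doubly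
transitive on the roots, then every `v ∈ R_f` satisfies
`v(1) = ⋯ = v(s) = (v(1)+⋯+v(n))/n`. -/
theorem statement10 (f : Polynomial ℚ) (hf0 : f.eval 0 ≠ 0) (n : ℕ) (hn : n = f.natDegree)
    (r : Fin n → ℂ) (hinj : Function.Injective r)
    (hroot : ∀ i, Polynomial.aeval (r i) f = 0)
    (hall : ∀ z : ℂ, Polynomial.aeval z f = 0 → ∃ i, r i = z)
    (s t : ℕ) (hst : n = s + t)
    (horder : ∀ i : Fin n, (i : ℕ) < s ↔ ¬ IsRootOfRational (r i))
    (h2t : SetDoublyTransitive (GaloisLike r)) :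
    ∀ v : Fin n → ℤ, (∏ i, r i ^ v i) = 1 →
      (∀ i j : Fin n, (i : ℕ) < s → (j : ℕ) < s → v i = v j) ∧
      (∀ i : Fin n, (i : ℕ) < s → (n : ℤ) * v i = ∑ j, v j) := by
  classical
  intro v hv
  have hr0 : ∀ k : Fin n, r k ≠ 0 := by
    intro k hk
    apply hf0
    have h1 := hroot k
    rw [hk, Polynomial.aeval_def, Polynomial.eval₂_at_zero] at h1
    have h2 : f.coeff 0 = 0 := (algebraMap ℚ ℂ).injective (by rw [h1, map_zero])
    rwa [Polynomial.coeff_zero_eq_eval_zero] at h2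
  have key : ∀ i : Fin n, (i : ℕ) < s → (n : ℤ) * v i = ∑ j, v j := by
    intro i hi
    by_contra hne
    -- notation
    set S : ℤ := ∑ j, v j with hS
    set a : ℤ := (n : ℤ) * v i - S with ha
    have ha0 : a ≠ 0 := fun h => hne (by omega)
    have hnpos : 0 < n := i.pos
    -- case n = 1
    have hn2 : 2 ≤ n := by
      rcases Nat.lt_or_ge n 2 with h | h
      · exfalso
        have hn1 : n = 1 := by omega
        have hju : ∀ j : Fin n, j = i := fun j => Fin.ext (by omega)
        have hSs : S = ∑ _j : Fin n, v i := Finset.sum_congr rfl (fun j _ => by rw [hju j])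
        rw [Finset.sum_const, Finset.card_univ, Fintype.card_fin, nsmul_eq_mul] at hSs
        exact ha0 (by omega)
      · exact h
    -- units
    set ρ : Fin n → ℂˣ := fun k => Units.mk0 (r k) (hr0 k) with hρ
    have hcoe : ∀ u : Fin n → ℤ, ((∏ k, ρ k ^ u k : ℂˣ) : ℂ) = ∏ k, r k ^ u k := by
      intro u
      push_cast
      rfl
    have hunit : ∀ u : Fin n → ℤ, (∏ k, r k ^ u k) = 1 → (∏ k, ρ k ^ u k) = 1 := by
      intro u hu
      apply Units.ext
      rw [hcoe]
      simpa using hu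
    set cu : ℂˣ := ∏ k, ρ k with hcu
    set w : Fin n → ℤ := fun k => (n : ℤ) * v k - S with hw
    have hPw : ∀ u : Fin n → ℤ, (∏ k, ρ k ^ u k) = 1 →
        (∏ k, ρ k ^ ((n : ℤ) * u k - S)) = cu ^ (-S) := by
      intro u hu
      have h1 : ∀ k : Fin n, ρ k ^ ((n : ℤ) * u k - S)
          = (ρ k ^ u k) ^ (n : ℤ) / (ρ k) ^ S := by
        intro k
        rw [zpow_sub]
        congr 1
        rw [mul_comm ((n:ℤ)) (u k), zpow_mul]
      rw [Finset.prod_congr rfl fun k _ => h1 k, Finset.prod_div_distrib,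
        Finset.prod_zpow, Finset.prod_zpow, hu, one_zpow, hcu, one_div, ← zpow_neg]
    have hw1 : (∏ k, ρ k ^ w k) = cu ^ (-S) := hPw v (hunit v hv)
    have hwσ : ∀ σ : Equiv.Perm (Fin n), σ ∈ GaloisLike r →
        (∏ k, ρ k ^ w (σ⁻¹ k)) = cu ^ (-S) := by
      intro σ hσ
      have h1 : (∏ k, r k ^ v (σ⁻¹ k)) = 1 := (galoisLike_iff r σ).1 hσ v hv
      exact hPw (fun k => v (σ⁻¹ k)) (hunit _ h1)
    -- the stabilizer
    set H : Finset (Equiv.Perm (Fin n)) :=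
      Finset.univ.filter (fun σ => σ ∈ GaloisLike r ∧ σ i = i) with hH
    have hHmem : ∀ σ : Equiv.Perm (Fin n), σ ∈ H ↔ (σ ∈ GaloisLike r ∧ σ i = i) := by
      intro σ; simp [hH]
    have hone : (1 : Equiv.Perm (Fin n)) ∈ H := (hHmem 1).mpr ⟨galoisLike_one r, rfl⟩
    have hh : 0 < H.card := Finset.card_pos.mpr ⟨1, hone⟩
    have hinvfix : ∀ σ : Equiv.Perm (Fin n), σ i = i → σ⁻¹ i = i := by
      intro σ hσi
      conv_lhs => rw [← hσi]
      simp
    obtain ⟨k0, hk0⟩ : ∃ k0 : Fin n, k0 ≠ i :=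
      Fintype.exists_ne_of_one_lt_card (by simp; omega) i
    set C : ℤ := ∑ σ ∈ H, w (σ⁻¹ k0) with hC
    have hCk : ∀ k : Fin n, k ≠ i → (∑ σ ∈ H, w (σ⁻¹ k)) = C := by
      intro k hk
      obtain ⟨τ, hτG, hτi, hτk⟩ := h2t i k0 i k (Ne.symm hk0) (Ne.symm hk)
      have hτG' : τ⁻¹ ∈ GaloisLike r := galoisLike_inv hτG
      have hτi' : τ⁻¹ i = i := hinvfix τ hτi
      refine Finset.sum_nbij' (fun σ => τ⁻¹ * σ) (fun σ => τ * σ) ?_ ?_ ?_ ?_ ?_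
      · intro σ hσ
        rcases (hHmem σ).1 hσ with ⟨h1, h2⟩
        exact (hHmem _).2 ⟨galoisLike_mul hτG' h1, by simp [Equiv.Perm.mul_apply, h2, hτi']⟩
      · intro σ hσ
        rcases (hHmem σ).1 hσ with ⟨h1, h2⟩
        exact (hHmem _).2 ⟨galoisLike_mul hτG h1, by simp [Equiv.Perm.mul_apply, h2, hτi]⟩
      · intro σ _
        simp [← mul_assoc]
      · intro σ _
        simp [← mul_assoc]
      · intro σ _
        rw [mul_inv_rev, inv_inv, Equiv.Perm.mul_apply, hτk]
    have hwsum : (∑ m, w m) = 0 := by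
      simp only [hw]
      rw [Finset.sum_sub_distrib, ← Finset.mul_sum, Finset.sum_const, Finset.card_univ,
        Fintype.card_fin, nsmul_eq_mul, ← hS]
      ring
    have hinner : ∀ σ ∈ H, (∑ k ∈ Finset.univ.erase i, w (σ⁻¹ k)) = -a := by
      intro σ hσ
      rcases (hHmem σ).1 hσ with ⟨_, h2⟩
      have h3 : σ⁻¹ i = i := hinvfix σ h2
      have h4 : (∑ k, w (σ⁻¹ k)) = ∑ m, w m := Equiv.sum_comp σ⁻¹ w
      have h5 : (∑ k, w (σ⁻¹ k)) = w (σ⁻¹ i) + ∑ k ∈ Finset.univ.erase i, w (σ⁻¹ k) :=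
        (Finset.add_sum_erase _ _ (Finset.mem_univ i)).symm
      rw [h4, hwsum, h3] at h5
      have h6 : w i = a := rfl
      omega
    have hsum : ((n : ℤ) - 1) * C = -(H.card : ℤ) * a := by
      have h6 : (∑ k ∈ Finset.univ.erase i, (∑ σ ∈ H, w (σ⁻¹ k))) = ((n:ℤ)-1) * C := by
        rw [Finset.sum_congr rfl (fun k hk => hCk k (Finset.ne_of_mem_erase hk)),
          Finset.sum_const, Finset.card_erase_of_mem (Finset.mem_univ i), Finset.card_univ,
          Fintype.card_fin, nsmul_eq_mul]
        congr 1
        omega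
      calc ((n:ℤ)-1) * C = ∑ k ∈ Finset.univ.erase i, (∑ σ ∈ H, w (σ⁻¹ k)) := h6.symm
        _ = ∑ σ ∈ H, ∑ k ∈ Finset.univ.erase i, w (σ⁻¹ k) := Finset.sum_comm
        _ = ∑ _σ ∈ H, (-a) := Finset.sum_congr rfl hinner
        _ = -(H.card:ℤ) * a := by rw [Finset.sum_const, nsmul_eq_mul]; ring
    -- final product
    set A : Fin n → ℤ := fun m => a + ((n:ℤ)-1) * w m with hA
    have hT1 : (∏ σ ∈ H, ∏ m, ρ m ^ (((n:ℤ)-1) * (w (σ⁻¹ m) - w m))) = 1 := by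
      refine Finset.prod_eq_one fun σ hσ => ?_
      rcases (hHmem σ).1 hσ with ⟨h1, _⟩
      have e1 : ∀ m : Fin n, ρ m ^ (((n:ℤ)-1) * (w (σ⁻¹ m) - w m))
          = (ρ m ^ (w (σ⁻¹ m)) / ρ m ^ (w m)) ^ ((n:ℤ)-1) := by
        intro m
        rw [show ((n:ℤ)-1) * (w (σ⁻¹ m) - w m) = (w (σ⁻¹ m) - w m) * ((n:ℤ)-1) from mul_comm _ _,
          zpow_mul]
        congr 1
        exact zpow_sub _ _ _
      rw [Finset.prod_congr rfl fun m _ => e1 m, Finset.prod_zpow, Finset.prod_div_distrib,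
        hwσ σ h1, hw1, div_self', one_zpow]
    set u' : Fin n → ℤ := fun m => ∑ σ ∈ H, (((n:ℤ)-1) * (w (σ⁻¹ m) - w m)) with hu'
    have hT2 : (∏ σ ∈ H, ∏ m, ρ m ^ (((n:ℤ)-1) * (w (σ⁻¹ m) - w m))) = ∏ m, ρ m ^ u' m := by
      rw [Finset.prod_comm]
      exact Finset.prod_congr rfl fun m _ => (zpow_sum' (ρ m) H _).symm
    have hu'i : u' i = 0 := by
      refine Finset.sum_eq_zero fun σ hσ => ?_
      rcases (hHmem σ).1 hσ with ⟨_, h2⟩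
      rw [hinvfix σ h2]
      ring
    have hu'm : ∀ m : Fin n, m ≠ i → u' m = -(H.card:ℤ) * A m := by
      intro m hm
      have e1 : u' m = ((n:ℤ)-1) * ((∑ σ ∈ H, w (σ⁻¹ m)) - (H.card : ℤ) * w m) := by
        show (∑ σ ∈ H, (((n:ℤ)-1) * (w (σ⁻¹ m) - w m))) = _
        rw [← Finset.mul_sum, Finset.sum_sub_distrib, Finset.sum_const, nsmul_eq_mul]
      rw [hCk m hm] at e1
      have e2 : A m = a + ((n:ℤ)-1) * w m := rfl
      rw [e2]
      linear_combination e1 + hsum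
    have hQ : (∏ m, ρ m ^ u' m)
        = ((cu / ρ i) ^ a * ((cu ^ (-S)) / (ρ i) ^ a) ^ ((n:ℤ)-1)) ^ (-(H.card:ℤ)) := by
      rw [← Finset.mul_prod_erase Finset.univ _ (Finset.mem_univ i), hu'i, zpow_zero, one_mul]
      have e2 : ∀ m ∈ Finset.univ.erase i, ρ m ^ u' m = (ρ m ^ A m) ^ (-(H.card:ℤ)) := by
        intro m hm
        rw [hu'm m (Finset.ne_of_mem_erase hm),
          show -(H.card:ℤ) * A m = A m * -(H.card:ℤ) from mul_comm _ _, zpow_mul]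
      rw [Finset.prod_congr rfl e2, Finset.prod_zpow]
      congr 1
      have e3 : ∀ m : Fin n, ρ m ^ A m = ρ m ^ a * (ρ m ^ w m) ^ ((n:ℤ)-1) := by
        intro m
        show ρ m ^ (a + ((n:ℤ)-1) * w m) = _
        rw [zpow_add]
        congr 1
        rw [show ((n:ℤ)-1) * w m = w m * ((n:ℤ)-1) from mul_comm _ _, zpow_mul]
      rw [Finset.prod_congr rfl fun m _ => e3 m, Finset.prod_mul_distrib, Finset.prod_zpow,
        Finset.prod_zpow]
      have e4 : (∏ m ∈ Finset.univ.erase i, ρ m) = cu / ρ i := by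
        rw [hcu, ← Finset.mul_prod_erase Finset.univ ρ (Finset.mem_univ i), mul_comm,
          mul_div_assoc, div_self', mul_one]
      have e5 : (∏ m ∈ Finset.univ.erase i, ρ m ^ w m) = cu ^ (-S) / (ρ i) ^ a := by
        have hwi : w i = a := rfl
        rw [← hw1, ← Finset.mul_prod_erase Finset.univ (fun m => ρ m ^ w m) (Finset.mem_univ i)]
        simp only [hwi]
        rw [mul_comm, mul_div_assoc, div_self', mul_one]
      rw [e4, e5]
    have hX : ((cu / ρ i) ^ a * ((cu ^ (-S)) / (ρ i) ^ a) ^ ((n:ℤ)-1)) ^ (-(H.card:ℤ)) = 1 := by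
      rw [← hQ, ← hT2, hT1]
    have hXval : (cu / ρ i) ^ a * ((cu ^ (-S)) / (ρ i) ^ a) ^ ((n:ℤ)-1)
        = cu ^ (a - S * ((n:ℤ)-1)) / (ρ i) ^ (a * n) := by
      rw [div_zpow, div_zpow, ← zpow_mul, ← zpow_mul, div_mul_div_comm, ← zpow_add, ← zpow_add]
      congr 1
      · congr 1
        ring
      · congr 1
        ring
    rw [hXval, div_zpow, ← zpow_mul, ← zpow_mul, div_eq_one] at hX
    have hfinal : (ρ i) ^ ((H.card : ℤ) * (a * n)) = cu ^ ((H.card : ℤ) * (a - S * ((n:ℤ) - 1))) := by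
      have h1 := congrArg (·⁻¹) hX
      simp only [← zpow_neg] at h1
      calc (ρ i) ^ ((H.card:ℤ) * (a*n)) = (ρ i) ^ (-((a*(n:ℤ)) * (-(H.card:ℤ)))) := by
            congr 1
            ring
        _ = cu ^ (-((a - S*((n:ℤ)-1)) * (-(H.card:ℤ)))) := h1.symm
        _ = cu ^ ((H.card:ℤ) * (a - S*((n:ℤ)-1))) := by
            congr 1
            ring
    -- conclude r i is a root of rational
    obtain ⟨q0, hq00, hq0c⟩ := prod_roots_rat f hf0 n hn r hinj hroot
    have hcuv : (cu : ℂ) = (q0 : ℂ) := by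
      rw [hcu, ← hq0c]
      push_cast
      rfl
    set M : ℤ := (H.card : ℤ) * (a * n) with hM
    set E : ℤ := (H.card : ℤ) * (a - S * ((n:ℤ) - 1)) with hE
    have hM0 : M ≠ 0 := by
      have : (n : ℤ) ≠ 0 := by exact_mod_cast hnpos.ne'
      have h1 : (H.card : ℤ) ≠ 0 := by exact_mod_cast hh.ne'
      simp only [hM, mul_ne_zero_iff]
      exact ⟨h1, ha0, this⟩
    have hri : (r i) ^ M = (q0 : ℂ) ^ E := by
      have := congrArg (Units.val) hfinal
      rw [Units.val_zpow_eq_zpow_val, Units.val_zpow_eq_zpow_val, hcuv] at this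
      simpa [hρ] using this
    have hroR : IsRootOfRational (r i) := by
      refine ⟨M.natAbs, Int.natAbs_pos.mpr hM0, ?_⟩
      rcases le_or_gt 0 M with hMp | hMn
      · refine ⟨q0 ^ E, ?_⟩
        have h1 : ((M.natAbs : ℤ)) = M := Int.natAbs_of_nonneg hMp
        rw [← zpow_natCast, h1, hri]
        push_cast
        ring
      · refine ⟨q0 ^ (-E), ?_⟩
        have h1 : ((M.natAbs : ℤ)) = -M := by omega
        rw [← zpow_natCast, h1, zpow_neg, hri, ← zpow_neg]
        push_cast
        ring
    exact (horder i).mp hi hroR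
  refine ⟨?_, key⟩
  intro i j hi hj
  have h1 := key i hi
  have h2 := key j hj
  have hn0 : (n : ℤ) ≠ 0 := by
    have := i.pos
    exact_mod_cast this.ne'
  exact mul_left_cancel₀ hn0 (h1.trans h2.symm)


end
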